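/- If A is a nonsingular M-tensor, then its majorization matrix M (with entries M_{ij} = a_{ij...j}) is a nonsingular M-matrix. -/

import Mathlib

open Finset Filter Topology

noncomputable section

/-- Action of an order-(p+1) tensor (p trailing indices):
`(A x^{p})_i = ∑ a_{i i₂ … i_{p+1}} x_{i₂} ⋯ x_{i_{p+1}}`. -/
def tapp (p n : ℕ) (A : Fin n → (Fin p → Fin n) → ℝ) (x : Fin n → ℝ) : Fin n → ℝ :=
  fun i => ∑ js : Fin p → Fin n, A i js * ∏ j, x (js j)

/-- A `Z`-tensor: all off-diagonal entries are nonpositive. -/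
def IsZTensor (p n : ℕ) (A : Fin n → (Fin p → Fin n) → ℝ) : Prop :=
  ∀ i js, (∃ j, js j ≠ i) → A i js ≤ 0

/-- The identity tensor. -/
def identT (p n : ℕ) : Fin n → (Fin p → Fin n) → ℝ :=
  fun i js => if ∀ j, js j = i then 1 else 0

/-- Spectral radius of a tensor: sup of moduli of (real) eigenvalues. -/
def tensorSpecRad (p n : ℕ) (B : Fin n → (Fin p → Fin n) → ℝ) : ℝ :=
  sSup {r : ℝ | ∃ lam : ℝ, ∃ x : Fin n → ℝ, x ≠ 0 ∧
    (∀ i, tapp p n B x i = lam * x i ^ p) ∧ r = |lam|}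

/-- A nonsingular M-tensor: `A = s I − B` with `B ≥ 0` and `s > ρ(B)`. -/
def IsMTensor (p n : ℕ) (A : Fin n → (Fin p → Fin n) → ℝ) : Prop :=
  ∃ s : ℝ, ∃ B : Fin n → (Fin p → Fin n) → ℝ,
    (∀ i js, 0 ≤ B i js) ∧ tensorSpecRad p n B < s ∧
    ∀ i js, A i js = s * identT p n i js - B i js

/-- The diagonal-part tensor of `A`. -/
def diagT (p n : ℕ) (A : Fin n → (Fin p → Fin n) → ℝ) : Fin n → (Fin p → Fin n) → ℝ :=
  fun i js => if ∀ j, js j = i then A i (fun _ => i) else 0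

/-- The majorization matrix of `A`: `M_{ij} = a_{i j … j}`. -/
def majMatrix (p n : ℕ) (A : Fin n → (Fin p → Fin n) → ℝ) : Matrix (Fin n) (Fin n) ℝ :=
  fun i j => A i (fun _ => j)

/-- The "mixed index" part `N = M_tensor − A`: zero on constant trailing tuples,
`−A` elsewhere. -/
def NPart (p n : ℕ) (A : Fin n → (Fin p → Fin n) → ℝ) : Fin n → (Fin p → Fin n) → ℝ :=
  fun i js => if ∀ j' j'', js j' = js j'' then 0 else -A i js

/-- A nonsingular M-matrix: a Z-matrix with `M y > 0` for some `y > 0`. -/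
def IsMMatrix (n : ℕ) (P : Matrix (Fin n) (Fin n) ℝ) : Prop :=
  (∀ i j, i ≠ j → P i j ≤ 0) ∧ ∃ y : Fin n → ℝ, (∀ i, 0 < y i) ∧ ∀ i, 0 < P.mulVec y i

/-- Spectral radius of a real matrix (via its complex spectrum). -/
def matSpecRad (n : ℕ) (J : Matrix (Fin n) (Fin n) ℝ) : ℝ :=
  sSup {r : ℝ | ∃ μ ∈ spectrum ℂ (J.map (Complex.ofReal ·)), r = ‖μ‖}

/-- Irreducibility of a matrix. -/
def MatIrreducible (n : ℕ) (J : Matrix (Fin n) (Fin n) ℝ) : Prop :=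
  ∀ S : Finset (Fin n), S.Nonempty → S ≠ Finset.univ → ∃ i ∈ S, ∃ j, j ∉ S ∧ J i j ≠ 0

namespace Aux19

variable {p n : ℕ}

lemma tapp_nonneg (B : Fin n → (Fin p → Fin n) → ℝ) (hB : ∀ i js, 0 ≤ B i js)
    (x : Fin n → ℝ) (hx : ∀ j, 0 ≤ x j) (i : Fin n) : 0 ≤ tapp p n B x i :=
  Finset.sum_nonneg fun js _ => mul_nonneg (hB i js) (Finset.prod_nonneg fun j _ => hx _)

lemma tapp_mono (B : Fin n → (Fin p → Fin n) → ℝ) (hB : ∀ i js, 0 ≤ B i js)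
    (x y : Fin n → ℝ) (hx : ∀ j, 0 ≤ x j) (hxy : ∀ j, x j ≤ y j) (i : Fin n) :
    tapp p n B x i ≤ tapp p n B y i :=
  Finset.sum_le_sum fun js _ => mul_le_mul_of_nonneg_left
    (Finset.prod_le_prod (fun j _ => hx _) (fun j _ => hxy _)) (hB i js)

lemma tapp_smul (B : Fin n → (Fin p → Fin n) → ℝ) (c : ℝ) (x : Fin n → ℝ) (i : Fin n) :
    tapp p n B (fun j => c * x j) i = c ^ p * tapp p n B x i := by
  unfold tapp
  rw [Finset.mul_sum]
  refine Finset.sum_congr rfl fun js _ => ?_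
  rw [Finset.prod_mul_distrib, Finset.prod_const]
  simp only [Finset.card_univ, Fintype.card_fin]
  ring

lemma tapp_continuous (B : Fin n → (Fin p → Fin n) → ℝ) (i : Fin n) :
    Continuous (fun x : Fin n → ℝ => tapp p n B x i) := by
  unfold tapp
  exact continuous_finset_sum _ fun js _ =>
    continuous_const.mul (continuous_finset_prod _ fun j _ => continuous_apply (js j))

lemma tapp_le (B : Fin n → (Fin p → Fin n) → ℝ) (hB : ∀ i js, 0 ≤ B i js)
    (x : Fin n → ℝ) (hx : ∀ j, 0 ≤ x j) (c : ℝ) (hc : ∀ j, x j ≤ c) (i : Fin n) :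
    tapp p n B x i ≤ (∑ js : Fin p → Fin n, B i js) * c ^ p := by
  rw [Finset.sum_mul]
  refine Finset.sum_le_sum fun js _ => mul_le_mul_of_nonneg_left ?_ (hB i js)
  calc ∏ j, x (js j) ≤ ∏ _j : Fin p, c :=
        Finset.prod_le_prod (fun j _ => hx _) (fun j _ => hc _)
    _ = c ^ p := by simp [Finset.prod_const, Finset.card_univ]

lemma eig_bound (hp : 1 ≤ p) (B : Fin n → (Fin p → Fin n) → ℝ) (hB : ∀ i js, 0 ≤ B i js)
    (lam : ℝ) (x : Fin n → ℝ) (hx : x ≠ 0)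
    (heig : ∀ i, tapp p n B x i = lam * x i ^ p) :
    |lam| ≤ ∑ i, ∑ js : Fin p → Fin n, B i js := by
  have hex : ∃ i, x i ≠ 0 := by
    by_contra h
    push_neg at h
    exact hx (funext fun i => h i)
  obtain ⟨i0, hi0⟩ := hex
  obtain ⟨im, -, him⟩ := Finset.exists_max_image Finset.univ (fun i => |x i|)
    ⟨i0, Finset.mem_univ _⟩
  have hxm : 0 < |x im| := lt_of_lt_of_le (abs_pos.mpr hi0) (him i0 (Finset.mem_univ _))
  have key : |lam| * |x im| ^ p ≤ (∑ js : Fin p → Fin n, B im js) * |x im| ^ p := by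
    have h1 : |lam| * |x im| ^ p = |tapp p n B x im| := by
      rw [heig im, abs_mul, abs_pow]
    rw [h1]
    calc |tapp p n B x im| ≤ ∑ js : Fin p → Fin n, |B im js * ∏ j, x (js j)| :=
          Finset.abs_sum_le_sum_abs _ _
      _ ≤ ∑ js : Fin p → Fin n, B im js * |x im| ^ p := by
          refine Finset.sum_le_sum fun js _ => ?_
          rw [abs_mul, abs_of_nonneg (hB im js), Finset.abs_prod]
          refine mul_le_mul_of_nonneg_left ?_ (hB im js)
          calc ∏ j, |x (js j)| ≤ ∏ _j : Fin p, |x im| :=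
                Finset.prod_le_prod (fun _ _ => abs_nonneg _)
                  (fun j _ => him _ (Finset.mem_univ _))
            _ = |x im| ^ p := by simp [Finset.prod_const, Finset.card_univ]
      _ = (∑ js : Fin p → Fin n, B im js) * |x im| ^ p := by rw [Finset.sum_mul]
  have h2 : |lam| ≤ ∑ js : Fin p → Fin n, B im js :=
    le_of_mul_le_mul_right key (pow_pos hxm p)
  refine h2.trans ?_
  exact Finset.single_le_sum (f := fun i => ∑ js : Fin p → Fin n, B i js)
    (fun i _ => Finset.sum_nonneg fun js _ => hB i js) (Finset.mem_univ im)

/-- The Collatz–Wielandt / Perron step for the strictly perturbed tensor. -/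
lemma lemA (p n : ℕ) (hp : 1 ≤ p) (hn : 0 < n) (B : Fin n → (Fin p → Fin n) → ℝ)
    (hB : ∀ i js, 0 ≤ B i js) (δ : ℝ) (hδ : 0 < δ) (hδ1 : δ ≤ 1) :

    ∃ r : ℝ, ∃ x : Fin n → ℝ, 0 < r ∧
      r ≤ (∑ i, ∑ js : Fin p → Fin n, B i js) + (n : ℝ) ^ p ∧
      (∀ i, 0 < x i) ∧ (∑ i, x i = 1) ∧
      ∀ i, tapp p n B x i + δ = r * x i ^ p := by
  have hp0 : p ≠ 0 := by omega
  haveI hne : Nonempty (Fin n) := Fin.pos_iff_nonempty.mp hn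
  set K : ℝ := ∑ i, ∑ js : Fin p → Fin n, B i js with hK
  have hK0 : 0 ≤ K := Finset.sum_nonneg fun i _ => Finset.sum_nonneg fun js _ => hB i js
  have hKrow : ∀ i, (∑ js : Fin p → Fin n, B i js) ≤ K :=
    fun i => Finset.single_le_sum (f := fun i => ∑ js : Fin p → Fin n, B i js)
      (fun i _ => Finset.sum_nonneg fun js _ => hB i js) (Finset.mem_univ i)
  set T0 : ℝ := K + (n : ℝ) ^ p with hT0
  set F : (Fin n → ℝ) → Fin n → ℝ :=
    fun x i => tapp p n B x i + δ * (∑ j, x j) ^ p with hF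
  have hFcont : ∀ i, Continuous (fun x => F x i) := fun i =>
    (tapp_continuous B i).add
      (continuous_const.mul ((continuous_finset_sum _ fun j _ => continuous_apply j).pow p))
  set Δ : Set (Fin n → ℝ) := stdSimplex ℝ (Fin n) with hΔ
  have hΔmem : ∀ x : Fin n → ℝ, x ∈ Δ ↔ (∀ i, 0 ≤ x i) ∧ ∑ i, x i = 1 := by
    intro x; rfl
  -- feasibility bound
  have feas : ∀ t : ℝ, ∀ x : Fin n → ℝ, x ∈ Δ → (∀ i, t * x i ^ p ≤ F x i) → t ≤ T0 := by
    intro t x hxΔ hfe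
    rw [hΔmem] at hxΔ
    obtain ⟨im, -, him⟩ := Finset.exists_max_image Finset.univ x Finset.univ_nonempty
    have hsum1 : (1 : ℝ) ≤ (n : ℝ) * x im := by
      have h1 : ∑ i, x i ≤ (Finset.univ : Finset (Fin n)).card • x im :=
        Finset.sum_le_card_nsmul _ _ _ (fun i _ => him i (Finset.mem_univ i))
      rw [hxΔ.2] at h1
      simpa [nsmul_eq_mul] using h1
    have hnpos : (0 : ℝ) < (n : ℝ) := by exact_mod_cast hn
    have hxim : 0 < x im := by nlinarith
    have hspow : (∑ j, x j) ^ p = 1 := by rw [hxΔ.2, one_pow]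
    have h2 : tapp p n B x im ≤ K * x im ^ p := by
      refine (tapp_le B hB x hxΔ.1 (x im) (fun j => him j (Finset.mem_univ j)) im).trans ?_
      exact mul_le_mul_of_nonneg_right (hKrow im) (pow_nonneg hxim.le p)
    have h4 : δ ≤ (n : ℝ) ^ p * x im ^ p := by
      have h5 : (1 : ℝ) ≤ ((n : ℝ) * x im) ^ p := one_le_pow₀ hsum1
      rw [mul_pow] at h5
      linarith
    have h6 : t * x im ^ p ≤ T0 * x im ^ p := by
      have := hfe im
      rw [hF] at this
      simp only [hspow, mul_one] at this
      rw [hT0, add_mul]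
      linarith
    exact le_of_mul_le_mul_right h6 (pow_pos hxim p)
  -- the CW set
  set Tset : Set ℝ := {t : ℝ | 0 ≤ t ∧ ∃ x ∈ Δ, ∀ i, t * x i ^ p ≤ F x i} with hTset
  have huΔ : (fun _ : Fin n => (n : ℝ)⁻¹) ∈ Δ := by
    rw [hΔmem]
    constructor
    · intro i; positivity
    · simp [Finset.sum_const, Finset.card_univ]
      field_simp
  have hnpos : (0 : ℝ) < (n : ℝ) := by exact_mod_cast hn
  have hδmem : δ ∈ Tset := by
    refine ⟨hδ.le, fun _ => (n : ℝ)⁻¹, huΔ, fun i => ?_⟩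
    have h1 : ((n : ℝ)⁻¹) ^ p ≤ 1 := by
      apply pow_le_one₀ (by positivity)
      rw [inv_le_one_iff₀]
      right
      exact_mod_cast hn
    have h2 : (∑ _j : Fin n, (n : ℝ)⁻¹) = 1 := by
      simp [Finset.sum_const, Finset.card_univ]; field_simp
    have h3 : 0 ≤ tapp p n B (fun _ => (n : ℝ)⁻¹) i :=
      tapp_nonneg B hB _ (fun j => by positivity) i
    rw [hF]
    simp only [h2, one_pow, mul_one]
    nlinarith
  have hbdd : BddAbove Tset := ⟨T0, fun t ht => feas t _ ht.2.choose_spec.1 ht.2.choose_spec.2⟩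
  set r : ℝ := sSup Tset with hr
  have hδr : δ ≤ r := le_csSup hbdd hδmem
  have hr0 : 0 < r := lt_of_lt_of_le hδ hδr
  -- compactness, attainment
  set E : Set (ℝ × (Fin n → ℝ)) :=
    {q | q.1 ∈ Set.Icc 0 T0 ∧ q.2 ∈ Δ ∧ ∀ i, q.1 * q.2 i ^ p ≤ F q.2 i} with hE
  have hEcl : IsClosed E := by
    have h1 : IsClosed {q : ℝ × (Fin n → ℝ) | q.1 ∈ Set.Icc 0 T0} :=
      isClosed_Icc.preimage continuous_fst
    have h2 : IsClosed {q : ℝ × (Fin n → ℝ) | q.2 ∈ Δ} :=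
      (isClosed_stdSimplex ℝ (Fin n)).preimage continuous_snd
    have h3 : ∀ i, IsClosed {q : ℝ × (Fin n → ℝ) | q.1 * q.2 i ^ p ≤ F q.2 i} := fun i =>
      isClosed_le (continuous_fst.mul (((continuous_apply i).comp continuous_snd).pow p))
        ((hFcont i).comp continuous_snd)
    have : E = {q : ℝ × (Fin n → ℝ) | q.1 ∈ Set.Icc 0 T0} ∩
        ({q | q.2 ∈ Δ} ∩ ⋂ i, {q : ℝ × (Fin n → ℝ) | q.1 * q.2 i ^ p ≤ F q.2 i}) := by
      ext q
      simp only [hE, Set.mem_setOf_eq, Set.mem_inter_iff, Set.mem_iInter]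
    rw [this]
    exact h1.inter (h2.inter (isClosed_iInter h3))
  have hEcomp : IsCompact E := by
    refine IsCompact.of_isClosed_subset ((isCompact_Icc : IsCompact (Set.Icc (0:ℝ) T0)).prod (isCompact_stdSimplex ℝ (Fin n))) hEcl ?_
    intro q hq
    exact Set.mk_mem_prod hq.1 hq.2.1
  have hTeq : Tset = Prod.fst '' E := by
    ext t
    constructor
    · rintro ⟨ht0, x, hxΔ, hfe⟩
      exact ⟨(t, x), ⟨⟨ht0, feas t x hxΔ hfe⟩, hxΔ, hfe⟩, rfl⟩
    · rintro ⟨⟨t', x⟩, ⟨hIcc, hxΔ, hfe⟩, rfl⟩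
      exact ⟨hIcc.1, x, hxΔ, hfe⟩
  have hTcomp : IsCompact Tset := hTeq ▸ hEcomp.image continuous_fst
  have hrmem : r ∈ Tset := hTcomp.sSup_mem ⟨δ, hδmem⟩
  obtain ⟨-, xb, hxΔ, hfe⟩ := hrmem
  have hxΔ' := (hΔmem xb).mp hxΔ
  have hspow : (∑ j, xb j) ^ p = 1 := by rw [hxΔ'.2, one_pow]
  have hFδ : ∀ i, δ ≤ F xb i := by
    intro i
    have h1 : 0 ≤ tapp p n B xb i := tapp_nonneg B hB xb hxΔ'.1 i
    rw [hF]
    simp only [hspow, mul_one]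
    linarith
  -- equality at the maximizer
  have heq : ∀ i, r * xb i ^ p = F xb i := by
    by_contra hcon
    push_neg at hcon
    obtain ⟨i0, hne0⟩ := hcon
    have hlt : r * xb i0 ^ p < F xb i0 := lt_of_le_of_ne (hfe i0) hne0
    set z : Fin n → ℝ := fun i => (F xb i) ^ ((p : ℝ)⁻¹) with hz
    clear_value z
    have hzpos : ∀ i, 0 < z i := fun i => by
      rw [hz]; exact Real.rpow_pos_of_pos (lt_of_lt_of_le hδ (hFδ i)) _
    have hzpow : ∀ i, z i ^ p = F xb i := fun i => by
      rw [hz]; exact Real.rpow_inv_natCast_pow (lt_of_lt_of_le hδ (hFδ i)).le hp0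
    set c : ℝ := r ^ ((p : ℝ)⁻¹) with hc
    clear_value c
    have hcpos : 0 < c := by rw [hc]; exact Real.rpow_pos_of_pos hr0 _
    have hcpow : c ^ p = r := by rw [hc]; exact Real.rpow_inv_natCast_pow hr0.le hp0
    have hlow : ∀ i, c * xb i ≤ z i := by
      intro i
      have h1 : (c * xb i) ^ p ≤ z i ^ p := by
        rw [mul_pow, hcpow, hzpow]; exact hfe i
      exact (pow_le_pow_iff_left₀ (mul_nonneg hcpos.le (hxΔ'.1 i)) (hzpos i).le hp0).mp h1
    have hstrict : c * xb i0 < z i0 := by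
      have h1 : (c * xb i0) ^ p < z i0 ^ p := by
        rw [mul_pow, hcpow, hzpow]; exact hlt
      exact lt_of_pow_lt_pow_left₀ p (hzpos i0).le h1
    set θ : ℝ := z i0 - c * xb i0 with hθdef
    clear_value θ
    have hθ : 0 < θ := by rw [hθdef]; exact sub_pos.mpr hstrict
    have hsz : c + θ ≤ ∑ i, z i := by
      have h1 : ∀ i, c * xb i + (if i = i0 then θ else 0) ≤ z i := by
        intro i
        by_cases h : i = i0
        · subst h; simp [hθdef]
        · simp only [h, if_false, add_zero]; exact hlow i
      calc c + θ = ∑ i, (c * xb i + if i = i0 then θ else 0) := by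
            rw [Finset.sum_add_distrib, ← Finset.mul_sum, hxΔ'.2, mul_one,
              Finset.sum_ite_eq' Finset.univ i0 (fun _ => θ)]
            simp
        _ ≤ ∑ i, z i := Finset.sum_le_sum fun i _ => h1 i
    set c0 : ℝ := δ * ((c + θ) ^ p - c ^ p) with hc0def
    clear_value c0
    have hc0 : 0 < c0 := by
      have := pow_lt_pow_left₀ (lt_add_of_pos_right c hθ) hcpos.le hp0
      rw [hc0def]
      exact mul_pos hδ (sub_pos.mpr this)
    have key : ∀ j, r * z j ^ p + c0 ≤ F z j := by
      intro j
      have m1 : tapp p n B (fun i => c * xb i) j ≤ tapp p n B z j :=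
        tapp_mono B hB _ _ (fun i => mul_nonneg hcpos.le (hxΔ'.1 i)) hlow j
      have m2 : tapp p n B (fun i => c * xb i) j = c ^ p * tapp p n B xb j :=
        tapp_smul B c xb j
      have m3 : δ * (c + θ) ^ p ≤ δ * (∑ i, z i) ^ p := by
        refine mul_le_mul_of_nonneg_left ?_ hδ.le
        exact pow_le_pow_left₀ (add_nonneg hcpos.le hθ.le) hsz p
      have e1 : F xb j = tapp p n B xb j + δ := by
        rw [hF]; simp only [hspow, mul_one]
      have e4 : δ * (c + θ) ^ p = δ * c ^ p + c0 := by rw [hc0def]; ring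
      calc r * z j ^ p + c0 = r * (tapp p n B xb j + δ) + c0 := by rw [hzpow j, e1]
        _ = c ^ p * tapp p n B xb j + (δ * c ^ p + c0) := by rw [hcpow]; ring
        _ = c ^ p * tapp p n B xb j + δ * (c + θ) ^ p := by rw [e4]
        _ ≤ tapp p n B z j + δ * (∑ i, z i) ^ p := by rw [← m2]; linarith
        _ = F z j := by rw [hF]
    obtain ⟨jm, -, hjm⟩ := Finset.exists_max_image Finset.univ z Finset.univ_nonempty
    set M : ℝ := z jm ^ p with hM
    clear_value M
    have hMpos : 0 < M := by rw [hM]; exact pow_pos (hzpos jm) p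
    set t' : ℝ := r + c0 / M with ht'def
    clear_value t'
    have ht' : r < t' := by rw [ht'def]; exact lt_add_of_pos_right _ (div_pos hc0 hMpos)
    have hfz : ∀ j, t' * z j ^ p ≤ F z j := by
      intro j
      have h1 : z j ^ p ≤ M := by rw [hM]; exact pow_le_pow_left₀ (hzpos j).le (hjm j (Finset.mem_univ j)) p
      have h2 : (c0 / M) * z j ^ p ≤ c0 := by
        rw [div_mul_eq_mul_div, div_le_iff₀ hMpos]
        exact mul_le_mul_of_nonneg_left h1 hc0.le
      have h3 : t' * z j ^ p = r * z j ^ p + (c0 / M) * z j ^ p := by rw [ht'def]; ring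
      linarith [key j]
    set σ : ℝ := ∑ i, z i with hσdef
    clear_value σ
    have hσ : 0 < σ := by rw [hσdef]; exact Finset.sum_pos (fun i _ => hzpos i) Finset.univ_nonempty
    set w : Fin n → ℝ := fun i => σ⁻¹ * z i with hw
    clear_value w
    have hwΔ : w ∈ Δ := by
      rw [hΔmem]
      constructor
      · intro i; rw [hw]; exact mul_nonneg (inv_nonneg.mpr hσ.le) (hzpos i).le
      · rw [hw]
        simp only [← Finset.mul_sum, ← hσdef]
        field_simp
    have hwfe : ∀ i, t' * w i ^ p ≤ F w i := by
      intro i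
      have e1 : tapp p n B w i = σ⁻¹ ^ p * tapp p n B z i := by
        rw [hw]; exact tapp_smul B σ⁻¹ z i
      have e2 : (∑ j, w j) ^ p = σ⁻¹ ^ p * (∑ j, z j) ^ p := by
        rw [hw]; rw [← Finset.mul_sum, mul_pow]
      have e3 : w i ^ p = σ⁻¹ ^ p * z i ^ p := by rw [hw]; rw [mul_pow]
      have h4 : σ⁻¹ ^ p * (t' * z i ^ p) ≤ σ⁻¹ ^ p * F z i :=
        mul_le_mul_of_nonneg_left (hfz i) (pow_nonneg (inv_nonneg.mpr hσ.le) p)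
      have e5 : F w i = tapp p n B w i + δ * (∑ j, w j) ^ p := by rw [hF]
      have e6 : F z i = tapp p n B z i + δ * (∑ j, z j) ^ p := by rw [hF]
      rw [e5, e1, e2, e3]
      rw [e6] at h4
      nlinarith [h4]
    have ht'T : t' ∈ Tset := ⟨(hr0.trans ht').le, w, hwΔ, hwfe⟩
    exact absurd (le_csSup hbdd ht'T) (not_le.mpr ht')
  have hxpos : ∀ i, 0 < xb i := by
    intro i
    by_contra h
    push_neg at h
    have h0 : xb i = 0 := le_antisymm h (hxΔ'.1 i)
    have := heq i
    rw [h0, zero_pow hp0, mul_zero] at this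
    linarith [hFδ i]
  refine ⟨r, xb, hr0, feas r xb hxΔ hfe, hxpos, hxΔ'.2, fun i => ?_⟩
  have := heq i
  rw [hF] at this
  simp only [hspow, mul_one] at this
  linarith


/-- Key positivity: an M-tensor admits a positive vector with `A x^{p} > 0`,
expressed via `B`. -/
lemma key_pos (p n : ℕ) (hp : 1 ≤ p) (hn : 0 < n) (B : Fin n → (Fin p → Fin n) → ℝ)
    (hB : ∀ i js, 0 ≤ B i js) (s : ℝ) (hρ : tensorSpecRad p n B < s) :
    ∃ x : Fin n → ℝ, (∀ i, 0 < x i) ∧ ∀ i, tapp p n B x i < s * x i ^ p := by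
  have hp0 : p ≠ 0 := by omega
  set K : ℝ := ∑ i, ∑ js : Fin p → Fin n, B i js with hK
  have hbdd : BddAbove {r : ℝ | ∃ lam : ℝ, ∃ x : Fin n → ℝ, x ≠ 0 ∧
      (∀ i, tapp p n B x i = lam * x i ^ p) ∧ r = |lam|} := by
    refine ⟨K, ?_⟩
    rintro r ⟨lam, x, hx, heig, rfl⟩
    exact eig_bound hp B hB lam x hx heig
  by_contra hcon
  push_neg at hcon
  have lemAk : ∀ k : ℕ, ∃ r : ℝ, ∃ x : Fin n → ℝ, 0 < r ∧
      r ≤ K + (n : ℝ) ^ p ∧ (∀ i, 0 < x i) ∧ (∑ i, x i = 1) ∧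
      ∀ i, tapp p n B x i + 1 / ((k : ℝ) + 1) = r * x i ^ p := by
    intro k
    have h1 : (0 : ℝ) < 1 / ((k : ℝ) + 1) := by positivity
    have h2 : (1 : ℝ) / ((k : ℝ) + 1) ≤ 1 := by
      rw [div_le_one (by positivity)]
      simp
    exact lemA p n hp hn B hB _ h1 h2
  choose rr xx hr0 hrT hxpos hxsum heig using lemAk
  have hSk : ∀ k, s < rr k := by
    intro k
    obtain ⟨i, hi⟩ := hcon (xx k) (hxpos k)
    have h1 := heig k i
    have h2 : 0 < xx k i ^ p := pow_pos (hxpos k i) p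
    have h3 : (0 : ℝ) < 1 / ((k : ℝ) + 1) := by positivity
    nlinarith
  set S : Set (ℝ × (Fin n → ℝ)) :=
    Set.Icc (0 : ℝ) (K + (n : ℝ) ^ p) ×ˢ stdSimplex ℝ (Fin n) with hS
  have hScomp : IsCompact S := isCompact_Icc.prod (isCompact_stdSimplex ℝ (Fin n))
  have hmem : ∀ k, ((rr k, xx k) : ℝ × (Fin n → ℝ)) ∈ S := by
    intro k
    exact Set.mk_mem_prod ⟨(hr0 k).le, hrT k⟩ ⟨fun i => (hxpos k i).le, hxsum k⟩
  obtain ⟨q, hq, φ, hφ, hconv⟩ := hScomp.tendsto_subseq hmem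
  obtain ⟨rb, xb⟩ := q
  have hrconv : Tendsto (fun k => rr (φ k)) atTop (𝓝 rb) :=
    (continuous_fst.tendsto (rb, xb)).comp hconv
  have hxconv : Tendsto (fun k => xx (φ k)) atTop (𝓝 xb) :=
    (continuous_snd.tendsto (rb, xb)).comp hconv
  have hδconv : Tendsto (fun k : ℕ => 1 / ((φ k : ℝ) + 1)) atTop (𝓝 0) :=
    tendsto_one_div_add_atTop_nhds_zero_nat.comp hφ.tendsto_atTop
  have heigbar : ∀ i, tapp p n B xb i = rb * xb i ^ p := by
    intro i
    have h1 : Tendsto (fun k => tapp p n B (xx (φ k)) i + 1 / ((φ k : ℝ) + 1)) atTop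
        (𝓝 (tapp p n B xb i + 0)) :=
      (((tapp_continuous B i).tendsto xb).comp hxconv).add hδconv
    have h2 : Tendsto (fun k => rr (φ k) * xx (φ k) i ^ p) atTop (𝓝 (rb * xb i ^ p)) :=
      hrconv.mul ((((continuous_apply i).tendsto xb).comp hxconv).pow p)
    have h3 : (fun k => tapp p n B (xx (φ k)) i + 1 / ((φ k : ℝ) + 1)) =
        fun k => rr (φ k) * xx (φ k) i ^ p := funext fun k => heig (φ k) i
    rw [h3] at h1
    have h4 := tendsto_nhds_unique h1 h2
    rw [add_zero] at h4
    exact h4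
  have hxsum1 : ∑ i, xb i = 1 := by
    have : xb ∈ stdSimplex ℝ (Fin n) := hq.2
    exact this.2
  have hxbne : xb ≠ 0 := by
    intro h
    rw [h] at hxsum1
    simp at hxsum1
  have hmem' : |rb| ∈ {r : ℝ | ∃ lam : ℝ, ∃ x : Fin n → ℝ, x ≠ 0 ∧
      (∀ i, tapp p n B x i = lam * x i ^ p) ∧ r = |lam|} :=
    ⟨rb, xb, hxbne, heigbar, rfl⟩
  have h5 : |rb| ≤ tensorSpecRad p n B := le_csSup hbdd hmem'
  have h6 : s ≤ rb := ge_of_tendsto hrconv (Filter.Eventually.of_forall fun k => (hSk (φ k)).le)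
  have h7 : rb ≤ |rb| := le_abs_self rb
  linarith

lemma aux_main (p n : ℕ) (hp : 1 ≤ p) (A : Fin n → (Fin p → Fin n) → ℝ)
    (hA : IsMTensor p n A) : IsMMatrix n (majMatrix p n A) := by
  obtain ⟨s, B, hB, hρ, hAB⟩ := hA
  haveI hpne : Nonempty (Fin p) := ⟨⟨0, hp⟩⟩
  have hp0 : p ≠ 0 := by omega
  have hident : ∀ i j : Fin n, identT p n i (fun _ => j) = if j = i then 1 else 0 := by
    intro i j
    unfold identT
    by_cases h : j = i
    · simp [h]
    · simp [h]
  constructor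
  · intro i j hij
    have h1 := hAB i (fun _ => j)
    rw [majMatrix, h1, hident]
    have : ¬ (j = i) := fun h => hij h.symm
    rw [if_neg this]
    simp [hB i _]
  · by_cases hn : n = 0
    · subst hn
      exact ⟨0, fun i => i.elim0, fun i => i.elim0⟩
    have hn' : 0 < n := Nat.pos_of_ne_zero hn
    obtain ⟨x, hxpos, hx⟩ := key_pos p n hp hn' B hB s hρ
    refine ⟨fun j => x j ^ p, fun j => pow_pos (hxpos j) p, fun i => ?_⟩
    have hmv : (majMatrix p n A).mulVec (fun j => x j ^ p) i =
        s * x i ^ p - ∑ j, B i (fun _ => j) * x j ^ p := by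
      unfold Matrix.mulVec dotProduct majMatrix
      simp only [hAB, hident]
      rw [show (∑ j, (s * (if j = i then (1:ℝ) else 0) - B i (fun _ => j)) * x j ^ p) =
          (∑ j, (if j = i then s * x j ^ p else 0)) - ∑ j, B i (fun _ => j) * x j ^ p by
        rw [← Finset.sum_sub_distrib]
        refine Finset.sum_congr rfl fun j _ => ?_
        by_cases h : j = i
        · simp only [h, if_true]
          ring
        · simp [h]]
      rw [Finset.sum_ite_eq' Finset.univ i (fun j => s * x j ^ p)]
      simp
    have hsub : ∑ j, B i (fun _ => j) * x j ^ p ≤ tapp p n B x i := by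
      have hinj : Function.Injective (fun j : Fin n => (fun _ : Fin p => j)) := by
        intro a b h
        exact congrFun h ⟨0, hp⟩
      calc ∑ j, B i (fun _ => j) * x j ^ p
          = ∑ js ∈ Finset.univ.image (fun j : Fin n => (fun _ : Fin p => j)),
              B i js * ∏ j', x (js j') := by
            rw [Finset.sum_image (fun a _ b _ h => hinj h)]
            refine Finset.sum_congr rfl fun j _ => ?_
            simp [Finset.prod_const, Finset.card_univ]
        _ ≤ ∑ js : Fin p → Fin n, B i js * ∏ j', x (js j') := by
            refine Finset.sum_le_sum_of_subset_of_nonneg (Finset.subset_univ _) ?_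
            intro js _ _
            exact mul_nonneg (hB i js) (Finset.prod_nonneg fun _ _ => (hxpos _).le)
        _ = tapp p n B x i := rfl
    rw [hmv]
    have := hx i
    linarith

end Aux19

/-- the majorization matrix of a nonsingular M-tensor is a nonsingular
M-matrix. -/
theorem stmt19 (m n : ℕ) (hm : 2 ≤ m) (A : Fin n → (Fin (m-1) → Fin n) → ℝ)
    (hA : IsMTensor (m-1) n A) :
    IsMMatrix n (majMatrix (m-1) n A) :=
  Aux19.aux_main (m-1) n (by omega) A hA

end
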